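/- Let E be a finite-dimensional real inner product space, T : E → E an iso-averaged linear map, and θ ∈ (0, 2) with θ ≠ 1. If x ∈ E satisfies T x ≠ x, then the sequence (‖T_θ^k x‖)_{k ∈ ℕ} is strictly decreasing: ‖T_θ^{k+1} x‖ < ‖T_θ^k x‖ for all k ∈ ℕ. -/
import Mathlib

open scoped RealInnerProductSpace

/-- If `T` is iso-averaged, `θ ∈ (0, 2)` with `θ ≠ 1`, and `T x ≠ x`,
then the sequence `(‖T_θ^k x‖)` is strictly decreasing. -/
theorem norm_pow_relaxation_strict_anti {E : Type*} [NormedAddCommGroup E]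
    [InnerProductSpace ℝ E] [FiniteDimensional ℝ E] (T : E →ₗ[ℝ] E)
    (hiso : (2 : ℝ) • (LinearMap.adjoint T ∘ₗ T) = T + LinearMap.adjoint T)
    (θ : ℝ) (hθ : θ ∈ Set.Ioo (0 : ℝ) 2) (hθ1 : θ ≠ 1) (x : E) (hx : T x ≠ x) :
    ∀ k : ℕ,
      ‖((θ • T + (1 - θ) • LinearMap.id : E →ₗ[ℝ] E) ^ (k + 1)) x‖ <
        ‖((θ • T + (1 - θ) • LinearMap.id : E →ₗ[ℝ] E) ^ k) x‖ := by
  obtain ⟨hθ0, hθ2⟩ := hθ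
  set S : E →ₗ[ℝ] E := θ • T + (1 - θ) • LinearMap.id with hS
  -- key pointwise identity
  have h1 : ∀ y : E, ⟪T y, y⟫ = ‖T y‖ ^ 2 := by
    intro y
    have h := congrArg (fun L : E →ₗ[ℝ] E => ⟪L y, y⟫) hiso
    simp only [LinearMap.smul_apply, LinearMap.add_apply, LinearMap.comp_apply,
      real_inner_smul_left, inner_add_left] at h
    rw [LinearMap.adjoint_inner_left] at h
    have hsym : ⟪LinearMap.adjoint T y, y⟫ = ⟪T y, y⟫ := by
      rw [LinearMap.adjoint_inner_left, real_inner_comm]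
    rw [hsym, real_inner_self_eq_norm_sq] at h
    linarith
  -- norm expansion for S
  have hn : ∀ y : E, ‖S y‖ ^ 2 = θ * (2 - θ) * ‖T y‖ ^ 2 + (1 - θ) ^ 2 * ‖y‖ ^ 2 := by
    intro y
    have hSy : S y = θ • T y + (1 - θ) • y := by simp [hS]
    have := real_inner_add_add_self (θ • T y) ((1 - θ) • y)
    rw [real_inner_smul_left, real_inner_smul_right, real_inner_smul_left,
      real_inner_smul_left, real_inner_smul_right, real_inner_smul_right,
      real_inner_self_eq_norm_sq, real_inner_self_eq_norm_sq,
      real_inner_self_eq_norm_sq, h1 y] at this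
    rw [hSy, this]
    ring
  -- norm of T y strictly smaller when not fixed
  have hT : ∀ y : E, T y ≠ y → ‖T y‖ ^ 2 < ‖y‖ ^ 2 := by
    intro y hy
    have hne : T y - y ≠ 0 := sub_ne_zero.mpr hy
    have h0 : (0 : ℝ) < ‖T y - y‖ ^ 2 := pow_pos (norm_pos_iff.mpr hne) 2
    have := @norm_sub_sq_real E _ _ (T y) y
    rw [h1 y] at this
    nlinarith
  -- strict decrease of S on non-fixed points
  have hdec : ∀ y : E, T y ≠ y → ‖S y‖ < ‖y‖ := by
    intro y hy
    have h2 : ‖S y‖ ^ 2 < ‖y‖ ^ 2 := by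
      rw [hn y]
      nlinarith [hT y hy, mul_pos hθ0 (by linarith : (0:ℝ) < 2 - θ)]
    exact lt_of_pow_lt_pow_left₀ 2 (norm_nonneg _) h2
  -- injectivity of S
  have hinj : ∀ y : E, S y = 0 → y = 0 := by
    intro y hy
    have h2 : ‖S y‖ ^ 2 = 0 := by rw [hy]; simp
    rw [hn y] at h2
    have hθ1' : (0:ℝ) < (1 - θ) ^ 2 := by
      have : (1 : ℝ) - θ ≠ 0 := fun h => hθ1 (by linarith)
      positivity
    by_contra hy0
    have hny : (0:ℝ) < ‖y‖ ^ 2 := by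
      have : ‖y‖ ≠ 0 := fun h => hy0 (norm_eq_zero.mp h)
      positivity
    have h3 : (0:ℝ) < (1 - θ) ^ 2 * ‖y‖ ^ 2 := mul_pos hθ1' hny
    have h4 : (0:ℝ) ≤ θ * (2 - θ) * ‖T y‖ ^ 2 :=
      mul_nonneg (mul_pos hθ0 (by linarith : (0:ℝ) < 2 - θ)).le (sq_nonneg _)
    linarith
  -- commutation
  have hcomm : ∀ y : E, T (S y) = S (T y) := by
    intro y
    simp [hS, map_add, map_smul]
  -- nonfixedness propagates
  have hfix : ∀ k : ℕ, T ((S ^ k) x) ≠ (S ^ k) x := by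
    intro k
    induction k with
    | zero => simpa using hx
    | succ n ih =>
      intro h
      rw [pow_succ', Module.End.mul_apply] at h
      -- h : T (S ((S^n) x)) = S ((S^n) x)
      set y := (S ^ n) x
      rw [hcomm y] at h
      have : S (T y - y) = 0 := by rw [map_sub, h, sub_self]
      exact ih (by have := hinj _ this; rwa [sub_eq_zero] at this)
  intro k
  rw [pow_succ', Module.End.mul_apply]
  exact hdec _ (hfix k)
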